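/- Let C(x) = ∫_0^x cos(πt²/2) dt and S(x) = ∫_0^x sin(πt²/2) dt. There exists δ > 0 such that the function ρ(b) = (1/b⁴)(C(b)² + S(b)²)² is strictly decreasing on (0, δ). -/

import Mathlib

/-- Normalized Fresnel cosine integral. -/
noncomputable def fresnelC (x : ℝ) : ℝ := ∫ t in (0 : ℝ)..x, Real.cos (Real.pi * t ^ 2 / 2)

/-- Normalized Fresnel sine integral. -/
noncomputable def fresnelS (x : ℝ) : ℝ := ∫ t in (0 : ℝ)..x, Real.sin (Real.pi * t ^ 2 / 2)

open Real MeasureTheory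

private lemma contCos : Continuous fun t : ℝ => Real.cos (π * t ^ 2 / 2) := by
  fun_prop

private lemma contSin : Continuous fun t : ℝ => Real.sin (π * t ^ 2 / 2) := by
  fun_prop

private lemma hasDerivC (b : ℝ) : HasDerivAt fresnelC (Real.cos (π * b ^ 2 / 2)) b :=
  intervalIntegral.integral_hasDerivAt_right (contCos.intervalIntegrable _ _)
    (contCos.stronglyMeasurableAtFilter _ _) contCos.continuousAt

private lemma hasDerivS (b : ℝ) : HasDerivAt fresnelS (Real.sin (π * b ^ 2 / 2)) b :=
  intervalIntegral.integral_hasDerivAt_right (contSin.intervalIntegrable _ _)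
    (contSin.stronglyMeasurableAtFilter _ _) contSin.continuousAt

private lemma hb2 {b : ℝ} (h0 : 0 < b) (h1 : b ≤ 1 / 2) : b ^ 2 ≤ 1 / 4 := by nlinarith

private lemma hb4 {b : ℝ} (h0 : 0 < b) (h1 : b ≤ 1 / 2) : b ^ 4 ≤ 1 / 16 := by
  nlinarith [hb2 h0 h1, sq_nonneg (b ^ 2)]

private lemma S_nonneg {b : ℝ} (h0 : 0 < b) (h1 : b ≤ 1 / 2) : 0 ≤ fresnelS b := by
  apply intervalIntegral.integral_nonneg h0.le
  intro t ht
  apply Real.sin_nonneg_of_nonneg_of_le_pi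
  · positivity
  · have ht2 : t ^ 2 ≤ 1 / 4 := by nlinarith [ht.1, ht.2]
    nlinarith [Real.pi_pos]

private lemma S_le {b : ℝ} (h0 : 0 < b) (h1 : b ≤ 1 / 2) :
    fresnelS b ≤ π * b ^ 3 / 6 := by
  have key : fresnelS b ≤ ∫ t in (0 : ℝ)..b, π * t ^ 2 / 2 := by
    apply intervalIntegral.integral_mono_on h0.le
      (contSin.intervalIntegrable _ _) (Continuous.intervalIntegrable (by fun_prop) _ _)
    intro t ht
    have := Real.sin_le (x := π * t ^ 2 / 2) (by positivity)
    linarith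
  have heq : (∫ t in (0 : ℝ)..b, π * t ^ 2 / 2) = π * b ^ 3 / 6 := by
    have h2 : (fun t : ℝ => π * t ^ 2 / 2) = fun t : ℝ => (π / 2) * t ^ 2 := by
      funext t; ring
    rw [h2, intervalIntegral.integral_const_mul, integral_pow]
    push_cast; ring
  linarith

private lemma C_lb {b : ℝ} (h0 : 0 < b) (h1 : b ≤ 1 / 2) :
    b * Real.cos (π * b ^ 2 / 2) ≤ fresnelC b := by
  have key : (∫ t in (0 : ℝ)..b, Real.cos (π * b ^ 2 / 2)) ≤ fresnelC b := by
    apply intervalIntegral.integral_mono_on h0.le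
      (Continuous.intervalIntegrable (by fun_prop) _ _) (contCos.intervalIntegrable _ _)
    intro t ht
    apply Real.cos_le_cos_of_nonneg_of_le_pi (by positivity)
    · nlinarith [hb2 h0 h1, Real.pi_pos]
    · have ht2 : t ^ 2 ≤ b ^ 2 := by nlinarith [ht.1, ht.2]
      nlinarith [Real.pi_pos]
  rw [intervalIntegral.integral_const] at key
  simpa using key

private lemma C_pos {b : ℝ} (h0 : 0 < b) (h1 : b ≤ 1 / 2) :
    b - π ^ 2 * b ^ 5 / 8 ≤ fresnelC b ∧ (92 : ℝ) / 100 * b ≤ b - π ^ 2 * b ^ 5 / 8 := by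
  have hc := C_lb h0 h1
  have hcos := Real.one_sub_sq_div_two_le_cos (x := π * b ^ 2 / 2)
  constructor
  · nlinarith [Real.pi_pos]
  · have h4 := hb4 h0 h1
    have hpi2 : π ^ 2 ≤ 9.9225 := by nlinarith [Real.pi_lt_d2, Real.pi_pos]
    have h5 : π ^ 2 * b ^ 4 ≤ 9.9225 * (1 / 16) :=
      mul_le_mul hpi2 h4 (by positivity) (by norm_num)
    nlinarith [mul_le_mul_of_nonneg_right h5 h0.le]

private lemma C_gap {b : ℝ} (h0 : 0 < b) (h1 : b ≤ 1 / 2) :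
    π ^ 2 / 10 * b ^ 5 - 5 * π ^ 4 / 1536 * b ^ 9
      ≤ fresnelC b - b * Real.cos (π * b ^ 2 / 2) := by
  have hBle : π * b ^ 2 / 2 ≤ 1 := by nlinarith [hb2 h0 h1, Real.pi_lt_d2]
  have hB : |π * b ^ 2 / 2| ≤ 1 := by rw [abs_of_nonneg (by positivity)]; exact hBle
  have hcosB : Real.cos (π * b ^ 2 / 2)
      ≤ 1 - (π * b ^ 2 / 2) ^ 2 / 2 + (π * b ^ 2 / 2) ^ 4 * (5 / 96) := by
    have h := abs_le.1 (Real.cos_bound hB)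
    rw [abs_of_nonneg (by positivity : (0:ℝ) ≤ π * b ^ 2 / 2)] at h
    linarith [h.2]
  have key : (∫ t in (0 : ℝ)..b,
        (-(π ^ 2 / 8) * t ^ 4 + (π ^ 2 / 8 * b ^ 4 - 5 * π ^ 4 / 1536 * b ^ 8
          + Real.cos (π * b ^ 2 / 2)))) ≤ fresnelC b := by
    apply intervalIntegral.integral_mono_on h0.le
      (Continuous.intervalIntegrable (by fun_prop) _ _) (contCos.intervalIntegrable _ _)
    intro t ht
    have hlo : 1 - (π * t ^ 2 / 2) ^ 2 / 2 ≤ Real.cos (π * t ^ 2 / 2) :=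
      Real.one_sub_sq_div_two_le_cos
    nlinarith [hcosB, hlo]
  have heq : (∫ t in (0 : ℝ)..b,
        (-(π ^ 2 / 8) * t ^ 4 + (π ^ 2 / 8 * b ^ 4 - 5 * π ^ 4 / 1536 * b ^ 8
          + Real.cos (π * b ^ 2 / 2))))
      = π ^ 2 / 10 * b ^ 5 - 5 * π ^ 4 / 1536 * b ^ 9 + b * Real.cos (π * b ^ 2 / 2) := by
    rw [intervalIntegral.integral_add
        (Continuous.intervalIntegrable (by fun_prop) _ _) intervalIntegrable_const,
      intervalIntegral.integral_const_mul, integral_pow, intervalIntegral.integral_const]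
    push_cast; simp only [smul_eq_mul]; ring
  rw [heq] at key
  linarith

private lemma S_gap {b : ℝ} (h0 : 0 < b) (h1 : b ≤ 1 / 2) :
    b * Real.sin (π * b ^ 2 / 2) - fresnelS b
      ≤ π * b ^ 3 / 3 + π ^ 3 / 48 * b ^ 7 + 5 * π ^ 4 / 1536 * b ^ 9 := by
  have hBle : π * b ^ 2 / 2 ≤ 1 := by nlinarith [hb2 h0 h1, Real.pi_lt_d2]
  have hsinB : Real.sin (π * b ^ 2 / 2) ≤ π * b ^ 2 / 2 := Real.sin_le (by positivity)
  have key : (∫ t in (0 : ℝ)..b,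
        ((π / 2) * t ^ 2 + (Real.sin (π * b ^ 2 / 2) - π / 2 * b ^ 2
          - (π * b ^ 2 / 2) ^ 3 / 6 - (π * b ^ 2 / 2) ^ 4 * (5 / 96)))) ≤ fresnelS b := by
    apply intervalIntegral.integral_mono_on h0.le
      (Continuous.intervalIntegrable (by fun_prop) _ _) (contSin.intervalIntegrable _ _)
    intro t ht
    have hta : |π * t ^ 2 / 2| ≤ 1 := by
      rw [abs_of_nonneg (by positivity)]
      have : t ^ 2 ≤ b ^ 2 := by nlinarith [ht.1, ht.2]
      nlinarith [Real.pi_pos]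
    have hsb := abs_le.1 (Real.sin_bound hta)
    rw [abs_of_nonneg (by positivity : (0:ℝ) ≤ π * t ^ 2 / 2)] at hsb
    have hlo : π * t ^ 2 / 2 - (π * t ^ 2 / 2) ^ 3 / 6 - (π * t ^ 2 / 2) ^ 4 * (5 / 96)
        ≤ Real.sin (π * t ^ 2 / 2) := by
      have hX0 : (0:ℝ) ≤ π * t ^ 2 / 2 := by positivity
      have hX1 : π * t ^ 2 / 2 ≤ 1 := (abs_le.1 hta).2
      nlinarith [hsb.1, mul_le_mul_of_nonneg_left hX1 (pow_nonneg hX0 4)]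
    have ht2 : t ^ 2 ≤ b ^ 2 := by nlinarith [ht.1, ht.2]
    have hcube : (π * t ^ 2 / 2) ^ 3 ≤ (π * b ^ 2 / 2) ^ 3 :=
      pow_le_pow_left₀ (by positivity) (by nlinarith [Real.pi_pos]) 3
    have hquart : (π * t ^ 2 / 2) ^ 4 ≤ (π * b ^ 2 / 2) ^ 4 :=
      pow_le_pow_left₀ (by positivity) (by nlinarith [Real.pi_pos]) 4
    nlinarith [hsinB, hlo]
  have heq : (∫ t in (0 : ℝ)..b,
        ((π / 2) * t ^ 2 + (Real.sin (π * b ^ 2 / 2) - π / 2 * b ^ 2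
          - (π * b ^ 2 / 2) ^ 3 / 6 - (π * b ^ 2 / 2) ^ 4 * (5 / 96))))
      = b * Real.sin (π * b ^ 2 / 2) - π * b ^ 3 / 3 - π ^ 3 / 48 * b ^ 7
        - 5 * π ^ 4 / 1536 * b ^ 9 := by
    rw [intervalIntegral.integral_add
        (Continuous.intervalIntegrable (by fun_prop) _ _) intervalIntegrable_const,
      intervalIntegral.integral_const_mul, integral_pow, intervalIntegral.integral_const]
    push_cast; simp only [smul_eq_mul]; ring
  rw [heq] at key
  linarith

set_option maxHeartbeats 1000000 in
private lemma key_ineq {b : ℝ} (h0 : 0 < b) (h1 : b ≤ 1 / 2) :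
    b * (fresnelC b * Real.cos (π * b ^ 2 / 2) + fresnelS b * Real.sin (π * b ^ 2 / 2))
      < fresnelC b ^ 2 + fresnelS b ^ 2 := by
  set c := fresnelC b
  set s := fresnelS b
  set co := Real.cos (π * b ^ 2 / 2)
  set si := Real.sin (π * b ^ 2 / 2)
  have h4 := hb4 h0 h1
  have hCl := C_lb h0 h1
  have hCp := C_pos h0 h1
  have hSn := S_nonneg h0 h1
  have hSl := S_le h0 h1
  have hCg := C_gap h0 h1
  have hSg := S_gap h0 h1
  have hc1 : (92 : ℝ) / 100 * b ≤ c := le_trans hCp.2 hCp.1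
  have hpi2l : (9.8596 : ℝ) ≤ π ^ 2 := by nlinarith [Real.pi_gt_d2]
  have hpi2 : π ^ 2 ≤ 9.9225 := by nlinarith [Real.pi_lt_d2, Real.pi_pos]
  have hpi4 : π ^ 4 ≤ 98.46 := by
    have := mul_self_le_mul_self (sq_nonneg π) hpi2
    nlinarith [this]
  have hc2 : (96 : ℝ) / 100 * b ^ 5 ≤ c - b * co := by
    refine le_trans ?_ hCg
    have ha : π ^ 4 * b ^ 4 ≤ 98.46 * (1 / 16) :=
      mul_le_mul hpi4 h4 (by positivity) (by norm_num)
    nlinarith [mul_le_mul_of_nonneg_right ha (pow_pos h0 5).le,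
      mul_le_mul_of_nonneg_right hpi2l (pow_pos h0 5).le]
  have hcpos : 0 < c := lt_of_lt_of_le (by nlinarith) hc1
  have hprod : (92 : ℝ) / 100 * b * ((96 : ℝ) / 100 * b ^ 5) ≤ c * (c - b * co) :=
    mul_le_mul hc1 hc2 (by positivity) hcpos.le
  have hQ : π * b ^ 3 / 3 + π ^ 3 / 48 * b ^ 7 + 5 * π ^ 4 / 1536 * b ^ 9
      ≤ (11 : ℝ) / 10 * b ^ 3 := by
    have hb7 : b ^ 7 ≤ b ^ 3 * (1 / 16) := by nlinarith [pow_pos h0 3]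
    have hb6 : b ^ 6 ≤ 1 / 64 := by
      calc b ^ 6 = (b ^ 2) ^ 3 := by ring
        _ ≤ (1 / 4) ^ 3 := pow_le_pow_left₀ (sq_nonneg b) (hb2 h0 h1) 3
        _ = 1 / 64 := by norm_num
    have hb9 : b ^ 9 ≤ b ^ 3 * (1 / 64) := by
      have := mul_le_mul_of_nonneg_left hb6 (pow_pos h0 3).le
      nlinarith [this]
    have hpi : π ≤ 3.15 := Real.pi_lt_d2.le
    have hpi3 : π ^ 3 ≤ 31.26 := by nlinarith [hpi, Real.pi_pos, sq_nonneg π, sq_nonneg (π - 3.15)]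
    have ht1 : π * b ^ 3 ≤ 3.15 * b ^ 3 := mul_le_mul_of_nonneg_right hpi (pow_pos h0 3).le
    have ht2 : π ^ 3 * b ^ 7 ≤ 31.26 * (b ^ 3 * (1 / 16)) :=
      mul_le_mul hpi3 hb7 (by positivity) (by norm_num)
    have ht3 : π ^ 4 * b ^ 9 ≤ 98.46 * (b ^ 3 * (1 / 64)) :=
      mul_le_mul hpi4 hb9 (by positivity) (by norm_num)
    nlinarith [pow_pos h0 3]
  have hsprod : s * (b * si - s) ≤ π * b ^ 3 / 6 * ((11 : ℝ) / 10 * b ^ 3) := by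
    rcases le_or_gt (b * si - s) 0 with h | h
    · have : s * (b * si - s) ≤ 0 := mul_nonpos_of_nonneg_of_nonpos hSn h
      have : (0:ℝ) ≤ π * b ^ 3 / 6 * ((11 : ℝ) / 10 * b ^ 3) := by positivity
      linarith
    · exact mul_le_mul hSl (le_trans hSg hQ) h.le (by positivity)
  have hfinal : π * b ^ 3 / 6 * ((11 : ℝ) / 10 * b ^ 3)
      < (92 : ℝ) / 100 * b * ((96 : ℝ) / 100 * b ^ 5) := by
    have := mul_le_mul_of_nonneg_right Real.pi_lt_d2.le (pow_pos h0 6).le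
    nlinarith [pow_pos h0 6]
  nlinarith [hprod, hsprod, hfinal]

theorem stmt_9 :
    ∃ δ > (0 : ℝ), StrictAntiOn
      (fun b : ℝ => (1 / b ^ 4) * (fresnelC b ^ 2 + fresnelS b ^ 2) ^ 2)
      (Set.Ioo 0 δ) := by
  refine ⟨1 / 2, by norm_num, ?_⟩
  have hfe : (fun b : ℝ => (1 / b ^ 4) * (fresnelC b ^ 2 + fresnelS b ^ 2) ^ 2)
      = fun b : ℝ => (fresnelC b ^ 2 + fresnelS b ^ 2) ^ 2 / b ^ 4 := by
    funext x; ring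
  rw [hfe]
  apply strictAntiOn_of_deriv_neg (convex_Ioo _ _)
  · apply ContinuousOn.div
    · apply Continuous.continuousOn
      have hC : Continuous fresnelC := by
        rw [continuous_iff_continuousAt]; exact fun x => (hasDerivC x).continuousAt
      have hS : Continuous fresnelS := by
        rw [continuous_iff_continuousAt]; exact fun x => (hasDerivS x).continuousAt
      fun_prop
    · fun_prop
    · intro x hx
      have : (0 : ℝ) < x := hx.1
      positivity
  · intro x hx
    rw [interior_Ioo] at hx
    obtain ⟨hx0, hx2⟩ := hx
    set c := Real.cos (π * x ^ 2 / 2) with hc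
    set s := Real.sin (π * x ^ 2 / 2) with hs
    have hg : HasDerivAt (fun b => fresnelC b ^ 2 + fresnelS b ^ 2)
        (2 * fresnelC x ^ 1 * c + 2 * fresnelS x ^ 1 * s) x :=
      (((hasDerivC x).pow 2).add ((hasDerivS x).pow 2))
    have hg2 : HasDerivAt (fun b => (fresnelC b ^ 2 + fresnelS b ^ 2) ^ 2)
        (2 * (fresnelC x ^ 2 + fresnelS x ^ 2) ^ 1 *
          (2 * fresnelC x ^ 1 * c + 2 * fresnelS x ^ 1 * s)) x := hg.pow 2
    have hx4 : HasDerivAt (fun b : ℝ => b ^ 4) ((4 : ℕ) * x ^ 3) x := by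
      simpa using hasDerivAt_pow 4 x
    have hx4ne : x ^ 4 ≠ 0 := by positivity
    have hdiv := hg2.div hx4 hx4ne
    rw [show (fun b : ℝ => (fresnelC b ^ 2 + fresnelS b ^ 2) ^ 2 / b ^ 4) = ((fun b => (fresnelC b ^ 2 + fresnelS b ^ 2) ^ 2) / fun b : ℝ => b ^ 4) from rfl, hdiv.deriv]
    apply div_neg_of_neg_of_pos
    · have hkey := key_ineq hx0 hx2.le
      have hCpos := C_pos hx0 hx2.le
      have hCl : (92 : ℝ) / 100 * x ≤ fresnelC x := le_trans hCpos.2 hCpos.1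
      have hgpos : 0 < fresnelC x ^ 2 + fresnelS x ^ 2 := by nlinarith
      have hx3 : (0 : ℝ) < x ^ 3 := by positivity
      push_cast
      nlinarith [mul_pos hx3 hgpos, mul_pos (mul_pos hx3 hgpos) (sub_pos.2 hkey)]
    · positivity
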